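/- Let M be a finitely generated A_n-module and let χ(t) = Σ_{i=0}^{2n} a_i·C(t+i, i) (with integer coefficients a_i) be the Bernstein polynomial associated with a finite system of generators f_1,…,f_m of M. Then the numbers a_{2n}, d = deg χ, and a_d do not depend on the finite system of generators of M with which the polynomial is associated: if χ*(t) = Σ_{i=0}^{2n} b_i·C(t+i, i) is the Bernstein polynomial associated with another finite system of generators g_1,…,g_p of M, then deg χ* = d, b_d = a_d, and b_{2n} = a_{2n}. -/

import Mathlib

set_option maxHeartbeats 1000000
set_option synthInstance.maxHeartbeats 1000000
set_option linter.unusedSectionVars false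

noncomputable section

variable (K : Type*) [Field K] [CharZero K]

/-! ### Numerical polynomials -/

/-- A polynomial `f ∈ ℚ[t]` is numerical if `f(s) ∈ ℤ` for all sufficiently large `s ∈ ℕ`. -/
def Numerical (f : Polynomial ℚ) : Prop :=
  ∃ N : ℕ, ∀ s : ℕ, N ≤ s → ∃ z : ℤ, f.eval (s : ℚ) = (z : ℚ)

/-- The binomial polynomial `C(t+i, i) = (t+1)(t+2)⋯(t+i)/i!`. -/
def binomPoly (i : ℕ) : Polynomial ℚ :=
  (i.factorial : ℚ)⁻¹ • ∏ k ∈ Finset.range i, (Polynomial.X + Polynomial.C ((k : ℚ) + 1))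

/-- The generalized binomial polynomial `C(t+c, m) = (t+c)(t+c-1)⋯(t+c-m+1)/m!` for `c ∈ ℤ`. -/
def genBinomPoly (c : ℤ) (m : ℕ) : Polynomial ℚ :=
  (m.factorial : ℚ)⁻¹ • ∏ k ∈ Finset.range m, (Polynomial.X + Polynomial.C ((c : ℚ) - (k : ℚ)))

/-! ### The Weyl algebra as a ring of operators -/

/-- The multiplication-by-`x_i` operator on `K[x_1,…,x_n]`. -/
def xOp (n : ℕ) (i : Fin n) : Module.End K (MvPolynomial (Fin n) K) :=
  LinearMap.mulLeft K (MvPolynomial.X i)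

/-- The partial derivative operator `∂_i` on `K[x_1,…,x_n]`. -/
def dOp (n : ℕ) (i : Fin n) : Module.End K (MvPolynomial (Fin n) K) :=
  (MvPolynomial.pderiv i).toLinearMap

/-- The `n`-th Weyl algebra `A_n(K)`: the `K`-subalgebra of `End_K K[X]` generated by the
multiplication operators `x_1,…,x_n` and the derivations `∂_1,…,∂_n`. -/
def weylAlgebra (n : ℕ) : Subalgebra K (Module.End K (MvPolynomial (Fin n) K)) :=
  Algebra.adjoin K (Set.range (xOp K n) ∪ Set.range (dOp K n))

/-- A (multi-index pair for a) monomial `x^α ∂^β` of the Weyl algebra. -/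
abbrev Mon (n : ℕ) := (Fin n → ℕ) × (Fin n → ℕ)

/-- The operator `x^α ∂^β = x_1^{α_1}⋯x_n^{α_n} ∂_1^{β_1}⋯∂_n^{β_n}`. -/
def weylMonomial (n : ℕ) (α β : Fin n → ℕ) : Module.End K (MvPolynomial (Fin n) K) :=
  (((List.finRange n).map fun i => xOp K n i ^ α i).prod) *
    (((List.finRange n).map fun i => dOp K n i ^ β i).prod)

lemma weylMonomial_mem (n : ℕ) (α β : Fin n → ℕ) :
    weylMonomial K n α β ∈ weylAlgebra K n := by
  apply mul_mem
  · apply list_prod_mem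
    intro x hx
    simp only [List.mem_map] at hx
    obtain ⟨i, -, rfl⟩ := hx
    exact pow_mem (Algebra.subset_adjoin (Set.mem_union_left _ (Set.mem_range_self i))) _
  · apply list_prod_mem
    intro x hx
    simp only [List.mem_map] at hx
    obtain ⟨i, -, rfl⟩ := hx
    exact pow_mem (Algebra.subset_adjoin (Set.mem_union_right _ (Set.mem_range_self i))) _

/-- The monomial `x^α ∂^β` as an element of the Weyl algebra. -/
def wMon (n : ℕ) (θ : Mon n) : ↥(weylAlgebra K n) :=
  ⟨weylMonomial K n θ.1 θ.2, weylMonomial_mem K n θ.1 θ.2⟩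

/-- The degree `|α| + |β|` of the monomial `x^α ∂^β`. -/
def monDeg {n : ℕ} (θ : Mon n) : ℕ := (∑ i, θ.1 i) + (∑ i, θ.2 i)

/-! ### Order and divisibility on monomials -/

/-- Lexicographic order on tuples of natural numbers. -/
def vecLexLT {N : ℕ} (v w : Fin N → ℕ) : Prop :=
  ∃ i, (∀ j, j < i → v j = w j) ∧ v i < w i

/-- The order on monomials of the Weyl algebra: compare `(deg, α_1,…,α_n, β_1,…,β_n)`
lexicographically. -/
def monLT {n : ℕ} (θ θ' : Mon n) : Prop :=
  monDeg θ < monDeg θ' ∨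
    (monDeg θ = monDeg θ' ∧ vecLexLT (Fin.append θ.1 θ.2) (Fin.append θ'.1 θ'.2))

def monLE {n : ℕ} (θ θ' : Mon n) : Prop := monLT θ θ' ∨ θ = θ'

/-- `x^α ∂^β` divides `x^γ ∂^δ` iff `α ≤ γ` and `β ≤ δ` componentwise. -/
def monDvd {n : ℕ} (θ θ' : Mon n) : Prop := θ.1 ≤ θ'.1 ∧ θ.2 ≤ θ'.2

/-- The quotient monomial `θ'/θ`. -/
def monQuot {n : ℕ} (θ' θ : Mon n) : Mon n := (θ'.1 - θ.1, θ'.2 - θ.2)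

/-- The least common multiple of two monomials. -/
def monLcm {n : ℕ} (θ θ' : Mon n) : Mon n := (θ.1 ⊔ θ'.1, θ.2 ⊔ θ'.2)

/-! ### The free module `E` over the Weyl algebra -/

/-- A free `A_n`-module with free generators `e_1,…,e_m`, realized as `A_n^m`. -/
abbrev EMod (n m : ℕ) := Fin m → ↥(weylAlgebra K n)

instance (n : ℕ) : Ring ↥(weylAlgebra K n) := inferInstance

instance (n : ℕ) : Algebra K ↥(weylAlgebra K n) := inferInstance

instance (n m : ℕ) : AddCommGroup (EMod K n m) := inferInstance

instance (n m : ℕ) : Module ↥(weylAlgebra K n) (EMod K n m) := inferInstance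

instance (n m : ℕ) : Module K (EMod K n m) := inferInstance

/-- A monomial `θ e_i` of `E` is a pair `(θ, i)`. -/
abbrev EMon (n m : ℕ) := Mon n × Fin m

/-- The monomial `θ e_i` as an element of `E`. -/
def emon {n m : ℕ} (w : EMon n m) : EMod K n m := Pi.single w.2 (wMon K n w.1)

/-- The order on monomials of `E`: `θ e_i < θ' e_j` iff `θ < θ'`, or `θ = θ'` and `i < j`. -/
def emonLT {n m : ℕ} (w w' : EMon n m) : Prop :=
  monLT w.1 w'.1 ∨ (w.1 = w'.1 ∧ w.2 < w'.2)

def emonLE {n m : ℕ} (w w' : EMon n m) : Prop := emonLT w w' ∨ w = w'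

/-- `θ e_i` divides `θ' e_j` iff `i = j` and `θ` divides `θ'`. -/
def emonDvd {n m : ℕ} (w w' : EMon n m) : Prop := w.2 = w'.2 ∧ monDvd w.1 w'.1

/-- `c` is the coordinate representation of `f ∈ E` in the `K`-basis of monomials of `E`. -/
def IsRepr {n m : ℕ} (f : EMod K n m) (c : EMon n m →₀ K) : Prop :=
  f = c.sum fun w k => k • emon K w

/-- The monomial `w` appears in `f` (with a nonzero coefficient). -/
def appearsIn {n m : ℕ} (f : EMod K n m) (w : EMon n m) : Prop :=
  ∃ c, IsRepr K f c ∧ w ∈ c.support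

/-- `w` is the leading monomial of `f` and `a` its leading coefficient. -/
def IsLead {n m : ℕ} (f : EMod K n m) (w : EMon n m) (a : K) : Prop :=
  ∃ c, IsRepr K f c ∧ w ∈ c.support ∧
    (∀ w' ∈ c.support, w' ≠ w → emonLT w' w) ∧ a = c w

/-- `w` is the leading monomial of `f`. -/
def IsLM {n m : ℕ} (f : EMod K n m) (w : EMon n m) : Prop := ∃ a, IsLead K f w a

/-- `f` is reduced with respect to `G`: `f = 0` or no monomial appearing in `f` is a multiple
of the leading monomial of an element of `G`. -/
def ReducedWrt {n m : ℕ} (f : EMod K n m) (G : Set (EMod K n m)) : Prop :=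
  f = 0 ∨ ∀ w, appearsIn K f w → ∀ g ∈ G, ∀ wg, IsLM K g wg → ¬ emonDvd wg w

/-- `h` is the S-polynomial `S(f,g)`. -/
def IsSPoly {n m : ℕ} (f g h : EMod K n m) : Prop :=
  ∃ wf af wg ag, IsLead K f wf af ∧ IsLead K g wg ag ∧
    ((wf.2 ≠ wg.2 ∧ h = 0) ∨
      (wf.2 = wg.2 ∧
        h = af⁻¹ • (wMon K n (monQuot (monLcm wf.1 wg.1) wf.1) • f)
          - ag⁻¹ • (wMon K n (monQuot (monLcm wf.1 wg.1) wg.1) • g)))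

/-- One-step reduction of `f` to `h` modulo `g`. -/
def ReduceStep {n m : ℕ} (g f h : EMod K n m) : Prop :=
  g ≠ 0 ∧ ∃ c : EMon n m →₀ K, IsRepr K f c ∧ ∃ w ∈ c.support, ∃ wg ag,
    IsLead K g wg ag ∧ emonDvd wg w ∧
    h = f - (c w * ag⁻¹) • (wMon K n (monQuot w.1 wg.1) • g)

/-- `f` reduces to `h` modulo the set `G` (finitely many one-step reductions). -/
def ReducesTo {n m : ℕ} (G : Set (EMod K n m)) (f h : EMod K n m) : Prop :=
  Relation.ReflTransGen (fun x y => ∃ g ∈ G, ReduceStep K g x y) f h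

/-- `g_1,…,g_s` is a Gröbner basis of the submodule `N` of `E`. -/
def IsGroebnerBasis {n m s : ℕ} (g : Fin s → EMod K n m)
    (N : Submodule (weylAlgebra K n) (EMod K n m)) : Prop :=
  (∀ i, g i ≠ 0) ∧ (∀ i, g i ∈ N) ∧
    ∀ f ∈ N, f ≠ 0 → ∀ w, IsLM K f w → ∃ i wi, IsLM K (g i) wi ∧ emonDvd wi w

/-! ### Bernstein filtration and Bernstein polynomials -/

/-- The Bernstein filtration `B_r` of the Weyl algebra: the `K`-span of the monomials of
degree at most `r`. -/
def BernsteinFil (n r : ℕ) : Submodule K ↥(weylAlgebra K n) :=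
  Submodule.span K {D : ↥(weylAlgebra K n) | ∃ θ : Mon n, monDeg θ ≤ r ∧ D = wMon K n θ}

/-- The filtration `M_r = Σ_i B_r f_i` of a module `M` generated by `f_1,…,f_p`. -/
def modFil (n : ℕ) {M : Type*} [AddCommGroup M] [Module (weylAlgebra K n) M]
    [Module K M] [IsScalarTower K (weylAlgebra K n) M] {p : ℕ}
    (f : Fin p → M) (r : ℕ) : Submodule K M :=
  Submodule.span K {x : M | ∃ i, ∃ D ∈ BernsteinFil K n r, x = D • f i}

/-- `χ` is the Bernstein polynomial of `M` associated with the system of generators `f`. -/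
def IsBernsteinOf (n : ℕ) {M : Type*} [AddCommGroup M] [Module (weylAlgebra K n) M]
    [Module K M] [IsScalarTower K (weylAlgebra K n) M] {p : ℕ}
    (f : Fin p → M) (χ : Polynomial ℚ) : Prop :=
  Submodule.span (weylAlgebra K n) (Set.range f) = ⊤ ∧ Numerical χ ∧
    ∃ N0 : ℕ, ∀ r : ℕ, N0 ≤ r →
      χ.eval (r : ℚ) = (Module.finrank K (modFil K n f r) : ℚ)

/-- `d = δ(M)`: `d` is the coefficient `a_{2n}` in the canonical representation
`χ(t) = Σ a_i C(t+i,i)` of a Bernstein polynomial of `M`. -/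
def HasDelta (n : ℕ) (M : Type*) [AddCommGroup M] [Module (weylAlgebra K n) M]
    [Module K M] [IsScalarTower K (weylAlgebra K n) M] (d : ℤ) : Prop :=
  ∃ (p : ℕ) (f : Fin p → M) (χ : Polynomial ℚ) (a : Fin (2*n+1) → ℤ),
    IsBernsteinOf K n f χ ∧ (χ = ∑ i, (a i : ℚ) • binomPoly (i : ℕ)) ∧
    d = a (Fin.last (2*n))

/-- A filtration of an `A_n`-module `P` with respect to the Bernstein filtration. -/
def IsBernsteinFiltration (n : ℕ) (P : Type*) [AddCommGroup P] [Module (weylAlgebra K n) P]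
    [Module K P] [IsScalarTower K (weylAlgebra K n) P]
    (Γ : ℕ → Submodule K P) : Prop :=
  (∀ r, Γ r ≤ Γ (r+1)) ∧ (∀ r, FiniteDimensional K (Γ r)) ∧ (⨆ r, Γ r) = ⊤ ∧
    ∀ r s : ℕ, ∀ D ∈ BernsteinFil K n r, ∀ x ∈ Γ s, D • x ∈ Γ (r+s)

/-- A good filtration: moreover `B_r Γ_s = Γ_{r+s}` for all `s ≥ s₀` and all `r`. -/
def IsGoodFiltration (n : ℕ) (P : Type*) [AddCommGroup P] [Module (weylAlgebra K n) P]
    [Module K P] [IsScalarTower K (weylAlgebra K n) P]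
    (Γ : ℕ → Submodule K P) : Prop :=
  IsBernsteinFiltration K n P Γ ∧
    ∃ s₀ : ℕ, ∀ s : ℕ, s₀ ≤ s → ∀ r : ℕ,
      Γ (r+s) ≤ Submodule.span K {y : P | ∃ D ∈ BernsteinFil K n r, ∃ x ∈ Γ s, y = D • x}

/-- The defining properties of the mapping `μ_U : B_U → ℤ ∪ {∞}` (on pairs from `U`). -/
def MuSpec (n : ℕ) (M : Type*) [AddCommGroup M] [Module (weylAlgebra K n) M]
    (U : Set (Submodule (weylAlgebra K n) M))
    (μ : Submodule (weylAlgebra K n) M → Submodule (weylAlgebra K n) M → WithTop ℤ) :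
    Prop :=
  (∀ N N', N ∈ U → N' ∈ U → N' ≤ N → ((-1 : ℤ) : WithTop ℤ) ≤ μ N N') ∧
    ∀ N N', N ∈ U → N' ∈ U → N' ≤ N → ∀ d : ℕ,
      (((d : ℤ) : WithTop ℤ) ≤ μ N N' ↔
        (N ≠ N' ∧ ∃ c : ℕ → Submodule (weylAlgebra K n) M,
          (∀ i, c i ∈ U) ∧ c 0 ≤ N ∧ (∀ i, c (i+1) ≤ c i) ∧ (∀ i, N' ≤ c i) ∧
          ∀ i, (((d : ℤ) - 1 : ℤ) : WithTop ℤ) ≤ μ (c i) (c (i+1))))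


lemma binomPoly_natDegree_le (i : ℕ) : (binomPoly i).natDegree ≤ i := by
  unfold binomPoly
  refine (Polynomial.natDegree_smul_le _ _).trans ?_
  refine (Polynomial.natDegree_prod_le _ _).trans ?_
  refine le_of_eq ?_
  calc ∑ x ∈ Finset.range i, (Polynomial.X + Polynomial.C ((x : ℚ) + 1)).natDegree
      = ∑ _x ∈ Finset.range i, 1 :=
        Finset.sum_congr rfl fun x _ => Polynomial.natDegree_X_add_C _
    _ = i := by simp

lemma binomPoly_coeff_of_lt {i k : ℕ} (h : i < k) : (binomPoly i).coeff k = 0 :=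
  Polynomial.coeff_eq_zero_of_natDegree_lt (lt_of_le_of_lt (binomPoly_natDegree_le i) h)

lemma binomPoly_coeff_self (i : ℕ) : (binomPoly i).coeff i = (i.factorial : ℚ)⁻¹ := by
  unfold binomPoly
  rw [Polynomial.coeff_smul, smul_eq_mul]
  have hm : (∏ k ∈ Finset.range i, (Polynomial.X + Polynomial.C ((k : ℚ) + 1))).Monic :=
    Polynomial.monic_prod_of_monic _ _ fun k _ => Polynomial.monic_X_add_C _
  have hd : (∏ k ∈ Finset.range i, (Polynomial.X + Polynomial.C ((k : ℚ) + 1))).natDegree = i := by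
    rw [Polynomial.natDegree_prod _ _ fun k _ => (Polynomial.monic_X_add_C _).ne_zero]
    calc ∑ x ∈ Finset.range i, (Polynomial.X + Polynomial.C ((x : ℚ) + 1)).natDegree
        = ∑ _x ∈ Finset.range i, 1 :=
          Finset.sum_congr rfl fun x _ => Polynomial.natDegree_X_add_C _
      _ = i := by simp
  have h1 : (∏ k ∈ Finset.range i, (Polynomial.X + Polynomial.C ((k : ℚ) + 1))).coeff i = 1 := by
    have := hm.coeff_natDegree
    rwa [hd] at this
  rw [h1, mul_one]

lemma binom_repr_coeff {N : ℕ} (a : Fin (N+1) → ℤ) (χ : Polynomial ℚ)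
    (hχ : χ = ∑ i, (a i : ℚ) • binomPoly (i : ℕ)) {j : ℕ}
    (hj : ∀ k, j < k → χ.coeff k = 0) :
    ∀ k : Fin (N+1), j ≤ (k : ℕ) → (a k : ℚ) = ((k : ℕ).factorial : ℚ) * χ.coeff k := by
  suffices H : ∀ t : ℕ, ∀ k : Fin (N+1), N - (k : ℕ) = t → j ≤ (k : ℕ) →
      (a k : ℚ) = ((k : ℕ).factorial : ℚ) * χ.coeff k by
    exact fun k hk => H _ k rfl hk
  intro t
  induction t using Nat.strong_induction_on with
  | _ t IH =>
  intro k hkt hjk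
  have hzero : ∀ i : Fin (N+1), (k : ℕ) < (i : ℕ) → (a i : ℚ) = 0 := by
    intro i hi
    have h1 := IH (N - (i : ℕ)) (by omega) i rfl (by omega)
    rw [h1, hj (i : ℕ) (lt_of_le_of_lt hjk hi), mul_zero]
  have hcoeff : χ.coeff (k : ℕ) = (a k : ℚ) * (((k : ℕ).factorial : ℚ))⁻¹ := by
    rw [hχ, Polynomial.finset_sum_coeff]
    rw [Finset.sum_eq_single k]
    · rw [Polynomial.coeff_smul, binomPoly_coeff_self, smul_eq_mul]
    · intro i _ hik
      rw [Polynomial.coeff_smul, smul_eq_mul]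
      rcases lt_or_gt_of_ne (fun h : (i : ℕ) = (k : ℕ) => hik (Fin.ext h)) with h | h
      · rw [binomPoly_coeff_of_lt h, mul_zero]
      · rw [hzero i h, zero_mul]
    · intro h; exact absurd (Finset.mem_univ k) h
  have hfact : (((k : ℕ).factorial : ℚ)) ≠ 0 := Nat.cast_ne_zero.mpr (Nat.factorial_ne_zero _)
  rw [hcoeff]
  field_simp

lemma leadingCoeff_nonneg_of_eventually_nonneg {p : Polynomial ℚ} (hp : p ≠ 0)
    {N : ℕ} (h : ∀ s : ℕ, N ≤ s → 0 ≤ p.eval (s : ℚ)) : 0 ≤ p.leadingCoeff := by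
  by_contra hneg
  push_neg at hneg
  rcases le_or_gt p.degree 0 with hd | hd
  · have hC := Polynomial.eq_C_of_degree_le_zero hd
    have h0 := h N le_rfl
    rw [hC] at h0
    simp only [Polynomial.eval_C] at h0
    have : p.leadingCoeff = p.coeff 0 := by
      rw [Polynomial.leadingCoeff, Polynomial.natDegree_eq_zero_iff_degree_le_zero.mpr hd]
    linarith
  · have ht := Polynomial.tendsto_atBot_of_leadingCoeff_nonpos p hd hneg.le
    have hev : ∀ᶠ s : ℕ in Filter.atTop, p.eval (s : ℚ) < 0 :=
      (ht.comp tendsto_natCast_atTop_atTop).eventually (Filter.eventually_lt_atBot 0)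
    rw [Filter.eventually_atTop] at hev
    obtain ⟨M, hM⟩ := hev
    have h1 := hM (max M N) (le_max_left _ _)
    have h2 := h (max M N) (le_max_right _ _)
    linarith

lemma coeff_sub_nonneg_of_shift (χ χ' : Polynomial ℚ) (c N : ℕ)
    (h : ∀ s : ℕ, N ≤ s → χ.eval (s : ℚ) ≤ χ'.eval ((s : ℚ) + (c : ℚ)))
    (d : ℕ) (hd : χ.natDegree ≤ d) (hd' : χ'.natDegree ≤ d)
    (hne : χ.coeff d ≠ χ'.coeff d) :
    0 ≤ χ'.coeff d - χ.coeff d := by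
  set A := χ'.comp (Polynomial.X + Polynomial.C (c : ℚ)) with hA
  set P := A - χ with hP
  have hAdeg : A.natDegree = χ'.natDegree := by
    rw [hA, Polynomial.natDegree_comp, Polynomial.natDegree_X_add_C, mul_one]
  have hAcoeff : A.coeff d = χ'.coeff d := by
    rcases eq_or_lt_of_le hd' with he | hlt
    · have hl : A.leadingCoeff = χ'.leadingCoeff := by
        rw [hA, Polynomial.leadingCoeff_comp (by rw [Polynomial.natDegree_X_add_C]; exact one_ne_zero),
          Polynomial.leadingCoeff_X_add_C, one_pow, mul_one]
      calc A.coeff d = A.coeff A.natDegree := by rw [hAdeg, ← he]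
        _ = A.leadingCoeff := rfl
        _ = χ'.leadingCoeff := hl
        _ = χ'.coeff χ'.natDegree := rfl
        _ = χ'.coeff d := by rw [← he]
    · rw [Polynomial.coeff_eq_zero_of_natDegree_lt (hAdeg ▸ hlt),
        Polynomial.coeff_eq_zero_of_natDegree_lt hlt]
  have hPcoeff : P.coeff d = χ'.coeff d - χ.coeff d := by
    rw [hP, Polynomial.coeff_sub, hAcoeff]
  have hPne : P ≠ 0 := by
    intro h0
    rw [h0, Polynomial.coeff_zero] at hPcoeff
    exact hne (by linarith [hPcoeff.symm])
  have hPdeg : P.natDegree = d := by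
    refine le_antisymm ((Polynomial.natDegree_sub_le _ _).trans ?_)
      (Polynomial.le_natDegree_of_ne_zero (hPcoeff ▸ sub_ne_zero.mpr (Ne.symm hne)))
    rw [hAdeg]; exact max_le hd' hd
  have hlead : P.leadingCoeff = χ'.coeff d - χ.coeff d := by
    rw [Polynomial.leadingCoeff, hPdeg, hPcoeff]
  have hev : ∀ s : ℕ, N ≤ s → 0 ≤ P.eval (s : ℚ) := by
    intro s hs
    have hcomp : P.eval (s : ℚ) = χ'.eval ((s : ℚ) + (c : ℚ)) - χ.eval (s : ℚ) := by
      rw [hP, Polynomial.eval_sub, hA, Polynomial.eval_comp]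
      simp
    rw [hcomp]
    linarith [h s hs]
  have := leadingCoeff_nonneg_of_eventually_nonneg hPne hev
  rwa [hlead] at this

lemma coeff_eq_of_two_shifts (χ χ' : Polynomial ℚ) (c c' N : ℕ)
    (h1 : ∀ s : ℕ, N ≤ s → χ.eval (s : ℚ) ≤ χ'.eval ((s : ℚ) + (c : ℚ)))
    (h2 : ∀ s : ℕ, N ≤ s → χ'.eval (s : ℚ) ≤ χ.eval ((s : ℚ) + (c' : ℚ)))
    (d : ℕ) (hd : χ.natDegree ≤ d) (hd' : χ'.natDegree ≤ d) :
    χ.coeff d = χ'.coeff d := by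
  by_contra hne
  have ha := coeff_sub_nonneg_of_shift χ χ' c N h1 d hd hd' hne
  have hb := coeff_sub_nonneg_of_shift χ' χ c' N h2 d hd' hd (Ne.symm hne)
  exact hne (by linarith)

lemma natDegree_eq_of_two_shifts (χ χ' : Polynomial ℚ) (c c' N : ℕ)
    (hχ : χ ≠ 0) (hχ' : χ' ≠ 0)
    (h1 : ∀ s : ℕ, N ≤ s → χ.eval (s : ℚ) ≤ χ'.eval ((s : ℚ) + (c : ℚ)))
    (h2 : ∀ s : ℕ, N ≤ s → χ'.eval (s : ℚ) ≤ χ.eval ((s : ℚ) + (c' : ℚ))) :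
    χ.natDegree = χ'.natDegree := by
  by_contra hne
  rcases lt_or_gt_of_ne hne with h | h
  · have := coeff_eq_of_two_shifts χ χ' c c' N h1 h2 χ'.natDegree h.le le_rfl
    rw [Polynomial.coeff_eq_zero_of_natDegree_lt h] at this
    exact (Polynomial.leadingCoeff_ne_zero.mpr hχ') this.symm
  · have := coeff_eq_of_two_shifts χ χ' c c' N h1 h2 χ.natDegree le_rfl h.le
    rw [Polynomial.coeff_eq_zero_of_natDegree_lt h] at this
    exact (Polynomial.leadingCoeff_ne_zero.mpr hχ) this

lemma poly_eq_zero_of_eventually_zero (χ : Polynomial ℚ) (N : ℕ)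
    (h : ∀ s : ℕ, N ≤ s → χ.eval (s : ℚ) = 0) : χ = 0 := by
  apply Polynomial.eq_zero_of_infinite_isRoot
  apply Set.Infinite.mono (s := (fun s : ℕ => (s : ℚ)) '' Set.Ici N)
  · rintro x ⟨s, hs, rfl⟩
    exact h s hs
  · exact (Set.Ici_infinite N).image (Set.injOn_of_injective Nat.cast_injective)
/-! ### Auxiliary lemmas: list products of commuting elements -/

section AuxList
variable {Mo : Type*} [Monoid Mo] {n : ℕ}

lemma aux_list_prod_pow_mul_pow (A : Fin n → Mo) (hA : ∀ i j, Commute (A i) (A j))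
    (l : List (Fin n)) (α β : Fin n → ℕ) :
    (l.map fun i => A i ^ α i).prod * (l.map fun i => A i ^ β i).prod
      = (l.map fun i => A i ^ (α i + β i)).prod := by
  induction l with
  | nil => simp
  | cons i t ih =>
    simp only [List.map_cons, List.prod_cons]
    have hc : Commute ((t.map fun i => A i ^ α i).prod) (A i ^ β i) := by
      apply Commute.list_prod_left
      intro x hx
      obtain ⟨j, hj, rfl⟩ := List.mem_map.mp hx
      exact (hA j i).pow_pow _ _
    rw [mul_assoc, ← mul_assoc _ (A i ^ β i), hc.eq, mul_assoc, ih, ← mul_assoc, ← pow_add]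

lemma aux_list_prod_eq_single (F : Fin n → Mo) (l : List (Fin n)) (j : Fin n)
    (hj : j ∈ l) (hl : l.Nodup) (hone : ∀ i ∈ l, i ≠ j → F i = 1) :
    (l.map F).prod = F j := by
  induction l with
  | nil => cases hj
  | cons i t ih =>
    simp only [List.map_cons, List.prod_cons]
    rcases List.mem_cons.mp hj with rfl | hjt
    · have h1 : (t.map F).prod = 1 := by
        apply List.prod_eq_one
        intro x hx
        obtain ⟨y, hy, rfl⟩ := List.mem_map.mp hx
        exact hone y (List.mem_cons_of_mem _ hy)
          (by rintro rfl; exact (List.nodup_cons.mp hl).1 hy)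
      rw [h1, mul_one]
    · rw [hone i List.mem_cons_self (by rintro rfl; exact (List.nodup_cons.mp hl).1 hjt),
        one_mul,
        ih hjt (List.nodup_cons.mp hl).2 (fun x hx => hone x (List.mem_cons_of_mem _ hx))]

end AuxList

/-! ### Commutation relations among the generators -/

section AuxOps
variable {n : ℕ}

lemma aux_xOp_comm (i j : Fin n) : Commute (xOp K n i) (xOp K n j) := by
  apply LinearMap.ext
  intro p
  simp only [Module.End.mul_apply, xOp, LinearMap.mulLeft_apply]
  ring

lemma aux_pderiv_comm (i j : Fin n) (p : MvPolynomial (Fin n) K) :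
    MvPolynomial.pderiv i (MvPolynomial.pderiv j p)
      = MvPolynomial.pderiv j (MvPolynomial.pderiv i p) := by
  induction p using MvPolynomial.induction_on' with
  | monomial u a =>
    rcases eq_or_ne i j with rfl | hij
    · rfl
    · simp only [MvPolynomial.pderiv_monomial]
      congr 1
      · rw [tsub_tsub, tsub_tsub, add_comm]
      · have h1 : (u - (Finsupp.single j 1 : Fin n →₀ ℕ)) i = u i := by
          rw [Finsupp.tsub_apply, Finsupp.single_eq_of_ne hij, tsub_zero]
        have h2 : (u - (Finsupp.single i 1 : Fin n →₀ ℕ)) j = u j := by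
          rw [Finsupp.tsub_apply, Finsupp.single_eq_of_ne (Ne.symm hij), tsub_zero]
        rw [h1, h2]; ring
  | add p q hp hq => simp [hp, hq]

lemma aux_dOp_comm (i j : Fin n) : Commute (dOp K n i) (dOp K n j) := by
  apply LinearMap.ext
  intro p
  simp only [Module.End.mul_apply, dOp, LinearMap.coe_mk, AddHom.coe_mk, Derivation.coeFn_coe]
  exact aux_pderiv_comm K i j p

lemma aux_dOp_xOp_ne {i j : Fin n} (h : i ≠ j) : Commute (dOp K n i) (xOp K n j) := by
  apply LinearMap.ext
  intro p
  simp only [Module.End.mul_apply, dOp, xOp, LinearMap.mulLeft_apply, Derivation.coeFn_coe]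
  rw [MvPolynomial.pderiv_mul, MvPolynomial.pderiv_X_of_ne (Ne.symm h)]
  ring

lemma aux_dOp_xOp_same (i : Fin n) :
    dOp K n i * xOp K n i = xOp K n i * dOp K n i + 1 := by
  apply LinearMap.ext
  intro p
  simp only [Module.End.mul_apply, LinearMap.add_apply, Module.End.one_apply,
    dOp, xOp, LinearMap.mulLeft_apply, Derivation.coeFn_coe]
  rw [MvPolynomial.pderiv_mul, MvPolynomial.pderiv_X_self]
  ring

lemma aux_dOp_pow_xOp (i : Fin n) (k : ℕ) :
    dOp K n i ^ k * xOp K n i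
      = xOp K n i * dOp K n i ^ k + k • dOp K n i ^ (k - 1) := by
  induction k with
  | zero => simp
  | succ k ih =>
    have h1 : dOp K n i ^ (k + 1) * xOp K n i = dOp K n i ^ k * (dOp K n i * xOp K n i) := by
      rw [pow_succ, mul_assoc]
    have h2 : k • (dOp K n i ^ (k - 1) * dOp K n i) = k • dOp K n i ^ k := by
      cases k with
      | zero => simp
      | succ m => rw [Nat.succ_sub_one, ← pow_succ]
    rw [h1, aux_dOp_xOp_same, mul_add, mul_one, ← mul_assoc, ih, add_mul, smul_mul_assoc, h2,
      mul_assoc, ← pow_succ, Nat.add_sub_cancel, succ_nsmul]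
    abel

lemma aux_dlist_mul_xOp (l : List (Fin n)) (hl : l.Nodup) (β : Fin n → ℕ) (j : Fin n)
    (hj : j ∈ l) :
    (l.map fun i => dOp K n i ^ β i).prod * xOp K n j
      = xOp K n j * (l.map fun i => dOp K n i ^ β i).prod
        + β j • (l.map fun i => dOp K n i ^ (Function.update β j (β j - 1) i)).prod := by
  induction l with
  | nil => cases hj
  | cons i t ih =>
    simp only [List.map_cons, List.prod_cons]
    rcases List.mem_cons.mp hj with rfl | hjt
    · have hjt' : j ∉ t := (List.nodup_cons.mp hl).1
      have hmapeq : ∀ γ : Fin n → ℕ,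
          t.map (fun i => dOp K n i ^ Function.update γ j (γ j - 1) i)
            = t.map fun i => dOp K n i ^ γ i := by
        intro γ
        apply List.map_congr_left
        intro x hx
        rw [Function.update_of_ne (by rintro rfl; exact hjt' hx) _ _]
      have hcomm : Commute ((t.map fun i => dOp K n i ^ β i).prod) (xOp K n j) := by
        apply Commute.list_prod_left
        intro x hx
        obtain ⟨y, hy, rfl⟩ := List.mem_map.mp hx
        exact ((aux_dOp_xOp_ne K (by rintro rfl; exact hjt' hy)).pow_left _)
      rw [mul_assoc, hcomm.eq, ← mul_assoc, aux_dOp_pow_xOp, add_mul, mul_assoc,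
        smul_mul_assoc, hmapeq β, Function.update_self]
    · have hij : i ≠ j := by rintro rfl; exact (List.nodup_cons.mp hl).1 hjt
      have hcomm : Commute (dOp K n i ^ β i) (xOp K n j) := (aux_dOp_xOp_ne K hij).pow_left _
      rw [mul_assoc, ih (List.nodup_cons.mp hl).2 hjt, mul_add, ← mul_assoc, hcomm.eq,
        mul_assoc, mul_smul_comm, Function.update_of_ne hij]

end AuxOps
/-! ### Products of Weyl monomials and the Bernstein filtration -/

section AuxMon
variable {n : ℕ}

/-- Shorthand: the product `x^α`. -/
def auxX (α : Fin n → ℕ) : Module.End K (MvPolynomial (Fin n) K) :=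
  ((List.finRange n).map fun i => xOp K n i ^ α i).prod

/-- Shorthand: the product `∂^β`. -/
def auxD (β : Fin n → ℕ) : Module.End K (MvPolynomial (Fin n) K) :=
  ((List.finRange n).map fun i => dOp K n i ^ β i).prod

lemma weylMonomial_eq (α β : Fin n → ℕ) :
    weylMonomial K n α β = auxX K α * auxD K β := rfl

lemma auxX_mul (α γ : Fin n → ℕ) :
    auxX K α * auxX K γ = auxX K (fun i => α i + γ i) :=
  aux_list_prod_pow_mul_pow _ (aux_xOp_comm K) _ _ _

lemma auxD_mul (β δ : Fin n → ℕ) :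
    auxD K β * auxD K δ = auxD K (fun i => β i + δ i) :=
  aux_list_prod_pow_mul_pow _ (aux_dOp_comm K) _ _ _

lemma auxX_zero : auxX K (0 : Fin n → ℕ) = 1 := by
  apply List.prod_eq_one
  intro x hx
  obtain ⟨y, _, rfl⟩ := List.mem_map.mp hx
  exact pow_zero _

lemma auxD_zero : auxD K (0 : Fin n → ℕ) = 1 := by
  apply List.prod_eq_one
  intro x hx
  obtain ⟨y, _, rfl⟩ := List.mem_map.mp hx
  exact pow_zero _

lemma auxX_single (j : Fin n) : auxX K (Pi.single j 1) = xOp K n j := by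
  have h := aux_list_prod_eq_single (fun i => xOp K n i ^ Pi.single j 1 i)
    (List.finRange n) j (List.mem_finRange j) (List.nodup_finRange n)
    (fun i _ hij => by simp only [Pi.single_eq_of_ne hij, pow_zero])
  rw [auxX, h]
  simp only [Pi.single_eq_same, pow_one]

lemma auxD_single (j : Fin n) : auxD K (Pi.single j 1) = dOp K n j := by
  have h := aux_list_prod_eq_single (fun i => dOp K n i ^ Pi.single j 1 i)
    (List.finRange n) j (List.mem_finRange j) (List.nodup_finRange n)
    (fun i _ hij => by simp only [Pi.single_eq_of_ne hij, pow_zero])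
  rw [auxD, h]
  simp only [Pi.single_eq_same, pow_one]

/-- The operator `x_j` as an element of the Weyl algebra. -/
def xW (n : ℕ) (j : Fin n) : ↥(weylAlgebra K n) :=
  ⟨xOp K n j, Algebra.subset_adjoin (Set.mem_union_left _ (Set.mem_range_self j))⟩

lemma wMon_val (θ : Mon n) :
    (wMon K n θ : Module.End K (MvPolynomial (Fin n) K)) = auxX K θ.1 * auxD K θ.2 := rfl

lemma wMon_one : wMon K n ((0 : Fin n → ℕ), (0 : Fin n → ℕ)) = 1 := by
  apply Subtype.ext
  rw [wMon_val, auxX_zero, auxD_zero, one_mul]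
  rfl

lemma wX_mul_wMon (α : Fin n → ℕ) (θ : Mon n) :
    wMon K n (α, (0 : Fin n → ℕ)) * wMon K n θ
      = wMon K n (fun i => α i + θ.1 i, θ.2) := by
  apply Subtype.ext
  rw [MulMemClass.coe_mul, wMon_val, wMon_val, wMon_val, auxD_zero, mul_one]
  rw [← mul_assoc, auxX_mul]

lemma wMon_mul_wD (θ : Mon n) (δ : Fin n → ℕ) :
    wMon K n θ * wMon K n ((0 : Fin n → ℕ), δ)
      = wMon K n (θ.1, fun i => θ.2 i + δ i) := by
  apply Subtype.ext
  rw [MulMemClass.coe_mul, wMon_val, wMon_val, wMon_val, auxX_zero, one_mul]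
  rw [mul_assoc, auxD_mul]

lemma wMon_split (α β : Fin n → ℕ) :
    wMon K n (α, β) = wMon K n (α, (0 : Fin n → ℕ)) * wMon K n ((0 : Fin n → ℕ), β) := by
  apply Subtype.ext
  rw [MulMemClass.coe_mul, wMon_val, wMon_val, wMon_val, auxX_zero, auxD_zero, mul_one, one_mul]

lemma xW_eq (j : Fin n) : xW K n j = wMon K n (Pi.single j 1, (0 : Fin n → ℕ)) := by
  apply Subtype.ext
  rw [wMon_val, auxD_zero, mul_one, auxX_single]
  rfl

lemma wD_mul_xW (β : Fin n → ℕ) (j : Fin n) :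
    wMon K n ((0 : Fin n → ℕ), β) * xW K n j
      = xW K n j * wMon K n ((0 : Fin n → ℕ), β)
        + (β j : K) • wMon K n ((0 : Fin n → ℕ), Function.update β j (β j - 1)) := by
  apply Subtype.ext
  rw [MulMemClass.coe_mul, AddMemClass.coe_add, MulMemClass.coe_mul, SetLike.val_smul]
  show auxX K (0 : Fin n → ℕ) * auxD K β * xOp K n j
      = xOp K n j * (auxX K (0 : Fin n → ℕ) * auxD K β)
        + (β j : K) • (auxX K (0 : Fin n → ℕ)
            * auxD K (Function.update β j (β j - 1)))
  rw [auxX_zero, one_mul, one_mul, Nat.cast_smul_eq_nsmul]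
  exact aux_dlist_mul_xOp K (List.finRange n) (List.nodup_finRange n) β j (List.mem_finRange j)

lemma monDeg_eq (θ : Mon n) : monDeg θ = (∑ i, θ.1 i) + (∑ i, θ.2 i) := rfl

lemma mem_B_mon {θ : Mon n} {r : ℕ} (h : monDeg θ ≤ r) :
    wMon K n θ ∈ BernsteinFil K n r :=
  Submodule.subset_span ⟨θ, h, rfl⟩

lemma B_mono {r r' : ℕ} (h : r ≤ r') : BernsteinFil K n r ≤ BernsteinFil K n r' :=
  Submodule.span_mono (by rintro D ⟨θ, hθ, rfl⟩; exact ⟨θ, hθ.trans h, rfl⟩)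

lemma B_mul_left (a : ↥(weylAlgebra K n)) {r k : ℕ}
    (h : ∀ θ : Mon n, monDeg θ ≤ r → a * wMon K n θ ∈ BernsteinFil K n k) :
    ∀ D ∈ BernsteinFil K n r, a * D ∈ BernsteinFil K n k := by
  intro D hD
  have hle : BernsteinFil K n r
      ≤ Submodule.comap (LinearMap.mulLeft K a) (BernsteinFil K n k) := by
    rw [BernsteinFil, Submodule.span_le]
    rintro x ⟨θ, hθ, rfl⟩
    exact h θ hθ
  exact hle hD

lemma B_mul_right (a : ↥(weylAlgebra K n)) {r k : ℕ}
    (h : ∀ θ : Mon n, monDeg θ ≤ r → wMon K n θ * a ∈ BernsteinFil K n k) :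
    ∀ D ∈ BernsteinFil K n r, D * a ∈ BernsteinFil K n k := by
  intro D hD
  have hle : BernsteinFil K n r
      ≤ Submodule.comap (LinearMap.mulRight K a) (BernsteinFil K n k) := by
    rw [BernsteinFil, Submodule.span_le]
    rintro x ⟨θ, hθ, rfl⟩
    exact h θ hθ
  exact hle hD

lemma sum_pi_single_one (j : Fin n) : (∑ i, Pi.single j (1 : ℕ) i) = 1 := by
  rw [Finset.sum_eq_single j (fun i _ hij => Pi.single_eq_of_ne hij 1)
    (fun h => absurd (Finset.mem_univ j) h), Pi.single_eq_same]

lemma wD_mul_wX_mem (s : ℕ) : ∀ γ : Fin n → ℕ, (∑ i, γ i) = s → ∀ β : Fin n → ℕ,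
    wMon K n ((0 : Fin n → ℕ), β) * wMon K n (γ, (0 : Fin n → ℕ))
      ∈ BernsteinFil K n ((∑ i, β i) + s) := by
  induction s with
  | zero =>
    intro γ hγ β
    have hγ0 : γ = 0 := funext fun i =>
      (Finset.sum_eq_zero_iff.mp hγ) i (Finset.mem_univ i)
    rw [hγ0, wMon_one, mul_one]
    exact mem_B_mon K (by simp [monDeg_eq])
  | succ s ih =>
    intro γ hγ β
    have hex : ∃ j, 0 < γ j := by
      by_contra hc
      push_neg at hc
      have : (∑ i, γ i) = 0 := Finset.sum_eq_zero fun i _ => Nat.le_zero.mp (hc i)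
      omega
    obtain ⟨j, hj⟩ := hex
    set γ' := Function.update γ j (γ j - 1) with hγ'def
    have hsum' : (∑ i, γ' i) = s := by
      rw [hγ'def, Finset.sum_update_of_mem (Finset.mem_univ j)]
      have h2 := Finset.sum_eq_add_sum_sdiff_singleton_of_mem (Finset.mem_univ j) γ
      omega
    have hsplit : wMon K n (γ, (0 : Fin n → ℕ))
        = xW K n j * wMon K n (γ', (0 : Fin n → ℕ)) := by
      rw [xW_eq, wX_mul_wMon]
      have : (fun i => (Pi.single j 1 : Fin n → ℕ) i + γ' i) = γ := by
        funext i
        rcases eq_or_ne i j with rfl | hij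
        · rw [Pi.single_eq_same, hγ'def, Function.update_self]; omega
        · rw [Pi.single_eq_of_ne hij, hγ'def, Function.update_of_ne hij, zero_add]
      rw [this]
    rw [hsplit, ← mul_assoc, wD_mul_xW, add_mul, smul_mul_assoc, mul_assoc]
    apply Submodule.add_mem
    · have h1 := ih γ' hsum' β
      have h2 : ∀ θ : Mon n, monDeg θ ≤ (∑ i, β i) + s →
          xW K n j * wMon K n θ ∈ BernsteinFil K n ((∑ i, β i) + (s + 1)) := by
        intro θ hθ
        rw [xW_eq, wX_mul_wMon]
        apply mem_B_mon
        rw [monDeg_eq]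
        simp only [Finset.sum_add_distrib, sum_pi_single_one]
        rw [monDeg_eq] at hθ
        omega
      exact B_mul_left K _ h2 _ h1
    · apply Submodule.smul_mem
      have h1 := ih γ' hsum' (Function.update β j (β j - 1))
      refine B_mono K ?_ h1
      have : (∑ i, Function.update β j (β j - 1) i) ≤ ∑ i, β i :=
        Finset.sum_le_sum fun i _ => by
          rcases eq_or_ne i j with rfl | hij
          · rw [Function.update_self]; omega
          · rw [Function.update_of_ne hij]
      omega

lemma wMon_mul_wMon_mem (θ θ' : Mon n) :
    wMon K n θ * wMon K n θ' ∈ BernsteinFil K n (monDeg θ + monDeg θ') := by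
  obtain ⟨α, β⟩ := θ
  obtain ⟨γ, δ⟩ := θ'
  rw [wMon_split K α β, wMon_split K γ δ, mul_assoc, ← mul_assoc (wMon K n ((0:Fin n → ℕ), β))]
  have h1 := wD_mul_wX_mem K (∑ i, γ i) γ rfl β
  have h2 : ∀ D ∈ BernsteinFil K n ((∑ i, β i) + (∑ i, γ i)),
      D * wMon K n ((0 : Fin n → ℕ), δ)
        ∈ BernsteinFil K n ((∑ i, β i) + (∑ i, γ i) + (∑ i, δ i)) := by
    apply B_mul_right
    intro θ0 hθ0
    rw [wMon_mul_wD]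
    apply mem_B_mon
    rw [monDeg_eq] at hθ0 ⊢
    simp only [Finset.sum_add_distrib]
    omega
  have h3 : ∀ D ∈ BernsteinFil K n ((∑ i, β i) + (∑ i, γ i) + (∑ i, δ i)),
      wMon K n (α, (0 : Fin n → ℕ)) * D
        ∈ BernsteinFil K n (monDeg (α, β) + monDeg (γ, δ)) := by
    apply B_mul_left
    intro θ0 hθ0
    rw [wX_mul_wMon]
    apply mem_B_mon
    rw [monDeg_eq] at hθ0 ⊢
    simp only [Finset.sum_add_distrib]
    simp only [monDeg_eq]
    omega
  exact h3 _ (h2 _ h1)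

lemma B_mul_mem {r s : ℕ} {D E : ↥(weylAlgebra K n)}
    (hD : D ∈ BernsteinFil K n r) (hE : E ∈ BernsteinFil K n s) :
    D * E ∈ BernsteinFil K n (r + s) := by
  refine B_mul_right K E (fun θ hθ => ?_) D hD
  refine B_mul_left K (wMon K n θ) (fun θ' hθ' => ?_) E hE
  exact B_mono K (by omega) (wMon_mul_wMon_mem K θ θ')

lemma exists_mem_B (D : ↥(weylAlgebra K n)) : ∃ r, D ∈ BernsteinFil K n r := by
  have h : ∀ (x : Module.End K (MvPolynomial (Fin n) K))
      (hx : x ∈ Algebra.adjoin K (Set.range (xOp K n) ∪ Set.range (dOp K n))),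
      ∃ r, (⟨x, hx⟩ : ↥(weylAlgebra K n)) ∈ BernsteinFil K n r := by
    intro x hx
    induction hx using Algebra.adjoin_induction with
    | mem x hxs =>
      rcases hxs with ⟨i, rfl⟩ | ⟨i, rfl⟩
      · refine ⟨1, ?_⟩
        have key : ∀ h' : xOp K n i ∈ weylAlgebra K n,
            (⟨xOp K n i, h'⟩ : ↥(weylAlgebra K n))
              = wMon K n (Pi.single i 1, (0 : Fin n → ℕ)) := fun h' => by
          apply Subtype.ext
          rw [wMon_val, auxD_zero, mul_one, auxX_single]
        refine (congrArg (fun z => z ∈ BernsteinFil K n _) (key _)).mpr ?_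
        exact mem_B_mon K (by rw [monDeg_eq]; simp [sum_pi_single_one])
      · refine ⟨1, ?_⟩
        have key : ∀ h' : dOp K n i ∈ weylAlgebra K n,
            (⟨dOp K n i, h'⟩ : ↥(weylAlgebra K n))
              = wMon K n ((0 : Fin n → ℕ), Pi.single i 1) := fun h' => by
          apply Subtype.ext
          rw [wMon_val, auxX_zero, one_mul, auxD_single]
        refine (congrArg (fun z => z ∈ BernsteinFil K n _) (key _)).mpr ?_
        exact mem_B_mon K (by rw [monDeg_eq]; simp [sum_pi_single_one])
    | algebraMap r =>
      refine ⟨0, ?_⟩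
      have key : ∀ h' : algebraMap K (Module.End K (MvPolynomial (Fin n) K)) r ∈ weylAlgebra K n,
          (⟨algebraMap K (Module.End K (MvPolynomial (Fin n) K)) r, h'⟩ : ↥(weylAlgebra K n))
            = r • wMon K n ((0 : Fin n → ℕ), (0 : Fin n → ℕ)) := fun h' => by
        apply Subtype.ext
        rw [SetLike.val_smul, wMon_one]
        simp [Algebra.algebraMap_eq_smul_one]
      refine (congrArg (fun z => z ∈ BernsteinFil K n _) (key _)).mpr ?_
      exact Submodule.smul_mem _ _ (mem_B_mon K (by simp [monDeg_eq]))
    | add x y hx hy ihx ihy =>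
      obtain ⟨r, hr⟩ := ihx
      obtain ⟨s, hs⟩ := ihy
      refine ⟨max r s, ?_⟩
      have key : ∀ h' : x + y ∈ weylAlgebra K n,
          (⟨x + y, h'⟩ : ↥(weylAlgebra K n)) = ⟨x, hx⟩ + ⟨y, hy⟩ := fun h' => rfl
      refine (congrArg (fun z => z ∈ BernsteinFil K n _) (key _)).mpr ?_
      exact Submodule.add_mem _ (B_mono K (le_max_left r s) hr) (B_mono K (le_max_right r s) hs)
    | mul x y hx hy ihx ihy =>
      obtain ⟨r, hr⟩ := ihx
      obtain ⟨s, hs⟩ := ihy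
      refine ⟨r + s, ?_⟩
      have key : ∀ h' : x * y ∈ weylAlgebra K n,
          (⟨x * y, h'⟩ : ↥(weylAlgebra K n)) = (⟨x, hx⟩ : ↥(weylAlgebra K n)) * ⟨y, hy⟩ :=
        fun h' => rfl
      refine (congrArg (fun z => z ∈ BernsteinFil K n _) (key _)).mpr ?_
      exact B_mul_mem K hr hs
  exact h D.1 D.2

end AuxMon
/-! ### Filtrations of finitely generated modules -/

section AuxMod
variable (n : ℕ) {M : Type*} [AddCommGroup M] [Module (weylAlgebra K n) M]
  [Module K M] [IsScalarTower K (weylAlgebra K n) M]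

/-- The `K`-linear map `D ↦ D • x`. -/
def auxSmulMap (x : M) : ↥(weylAlgebra K n) →ₗ[K] M where
  toFun D := D • x
  map_add' D E := add_smul D E x
  map_smul' k D := by simp [smul_assoc]

lemma monDeg_finite (r : ℕ) : {θ : Mon n | monDeg θ ≤ r}.Finite := by
  apply Set.Finite.subset (Set.Finite.prod
    (Set.Finite.pi fun _ : Fin n => Set.finite_Iic r)
    (Set.Finite.pi fun _ : Fin n => Set.finite_Iic r))
  rintro ⟨α, β⟩ h
  have hθ : (∑ i, α i) + (∑ i, β i) ≤ r := h
  constructor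
  · intro i _
    have h1 : α i ≤ ∑ i, α i :=
      Finset.single_le_sum (fun i _ => Nat.zero_le (α i)) (Finset.mem_univ i)
    exact Set.mem_Iic.mpr (h1.trans ((Nat.le_add_right _ _).trans hθ))
  · intro i _
    have h1 : β i ≤ ∑ i, β i :=
      Finset.single_le_sum (fun i _ => Nat.zero_le (β i)) (Finset.mem_univ i)
    exact Set.mem_Iic.mpr (h1.trans ((Nat.le_add_left _ _).trans hθ))

lemma modFil_fd {p : ℕ} (f : Fin p → M) (r : ℕ) :
    FiniteDimensional K (modFil K n f r) := by
  classical
  set S : Set M := (fun q : Mon n × Fin p => wMon K n q.1 • f q.2)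
      '' ({θ : Mon n | monDeg θ ≤ r} ×ˢ (Set.univ : Set (Fin p))) with hSdef
  have hS : S.Finite := Set.Finite.image _ ((monDeg_finite n r).prod Set.finite_univ)
  have hle : modFil K n f r ≤ Submodule.span K S := by
    rw [modFil, Submodule.span_le]
    rintro x ⟨i, D, hD, rfl⟩
    have h2 : (auxSmulMap K n (f i)) D
        ∈ Submodule.map (auxSmulMap K n (f i)) (BernsteinFil K n r) :=
      Submodule.mem_map_of_mem hD
    rw [BernsteinFil, Submodule.map_span] at h2
    have himg : (auxSmulMap K n (f i)) ''
        {D : ↥(weylAlgebra K n) | ∃ θ : Mon n, monDeg θ ≤ r ∧ D = wMon K n θ} ⊆ S := by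
      rintro y ⟨E, ⟨θ, hθ, rfl⟩, rfl⟩
      exact ⟨(θ, i), ⟨hθ, Set.mem_univ i⟩, rfl⟩
    exact Submodule.span_mono himg h2
  have h3 : FiniteDimensional K (Submodule.span K S) := FiniteDimensional.span_of_finite K hS
  exact Submodule.finiteDimensional_of_le hle

lemma modFil_shift {p q : ℕ} (f : Fin p → M) (g : Fin q → M)
    (hg : Submodule.span (weylAlgebra K n) (Set.range g) = ⊤) :
    ∃ c : ℕ, ∀ r, modFil K n f r ≤ modFil K n g (r + c) := by
  classical
  have hmem : ∀ i, ∃ w : Fin q → ↥(weylAlgebra K n), (∑ j, w j • g j) = f i := by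
    intro i
    have h1 : f i ∈ Submodule.span (weylAlgebra K n) (Set.range g) :=
      hg ▸ Submodule.mem_top
    exact (Submodule.mem_span_range_iff_exists_fun _).mp h1
  choose w hw using hmem
  have hB : ∀ i j, ∃ c, w i j ∈ BernsteinFil K n c := fun i j => exists_mem_B K (w i j)
  choose cc hcc using hB
  set c := Finset.univ.sup (fun ij : Fin p × Fin q => cc ij.1 ij.2) with hcdef
  refine ⟨c, fun r => ?_⟩
  rw [modFil, Submodule.span_le]
  rintro x ⟨i, D, hD, rfl⟩
  rw [← hw i, Finset.smul_sum]
  apply Submodule.sum_mem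
  intro j _
  rw [smul_smul]
  apply Submodule.subset_span
  refine ⟨j, D * w i j, ?_, rfl⟩
  have h1 : cc i j ≤ c := Finset.le_sup (f := fun ij : Fin p × Fin q => cc ij.1 ij.2)
    (Finset.mem_univ (i, j))
  exact B_mono K (by omega) (B_mul_mem K hD (hcc i j))

lemma eval_shift {p q : ℕ} (f : Fin p → M) (g : Fin q → M) (χ χ' : Polynomial ℚ)
    (hχ : IsBernsteinOf K n f χ) (hχ' : IsBernsteinOf K n g χ') :
    ∃ c N : ℕ, ∀ s : ℕ, N ≤ s → χ.eval (s : ℚ) ≤ χ'.eval ((s : ℚ) + (c : ℚ)) := by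
  obtain ⟨hft, hnum, N0, hval⟩ := hχ
  obtain ⟨hgt, hnum', N0', hval'⟩ := hχ'
  obtain ⟨c, hc⟩ := modFil_shift K n f g hgt
  refine ⟨c, max N0 N0', fun s hs => ?_⟩
  rw [hval s (le_trans (le_max_left _ _) hs)]
  have hcast : ((s : ℚ) + (c : ℚ)) = (((s + c : ℕ)) : ℚ) := by push_cast; ring
  rw [hcast, hval' (s + c) (le_trans (le_max_right N0 N0') (hs.trans (Nat.le_add_right s c)))]
  haveI := modFil_fd K n g (s + c)
  exact_mod_cast Submodule.finrank_mono (hc s)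

lemma eval_nonneg {p : ℕ} (f : Fin p → M) (χ : Polynomial ℚ)
    (hχ : IsBernsteinOf K n f χ) :
    ∃ N : ℕ, ∀ s : ℕ, N ≤ s → 0 ≤ χ.eval (s : ℚ) := by
  obtain ⟨hft, hnum, N0, hval⟩ := hχ
  exact ⟨N0, fun s hs => by rw [hval s hs]; exact Nat.cast_nonneg _⟩

end AuxMod
/-- Invariance of the Bernstein polynomial's invariants: if `χ` and `χ*` are
the Bernstein polynomials of `M` associated with two finite systems of generators, written in
canonical form `Σ_{i=0}^{2n} a_i C(t+i,i)` resp. `Σ_{i=0}^{2n} b_i C(t+i,i)`, then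
`deg χ* = deg χ`, `b_{2n} = a_{2n}`, and `b_d = a_d` for `d = deg χ`. -/
theorem bernstein_invariants (n : ℕ) (hn : 0 < n)
    (M : Type*) [AddCommGroup M] [Module (weylAlgebra K n) M] [Module K M]
    [IsScalarTower K (weylAlgebra K n) M]
    (m p : ℕ) (f : Fin m → M) (g : Fin p → M)
    (χ χ' : Polynomial ℚ) (a b : Fin (2*n+1) → ℤ)
    (hχ : IsBernsteinOf K n f χ) (hχ' : IsBernsteinOf K n g χ')
    (ha : χ = ∑ i, (a i : ℚ) • binomPoly (i : ℕ))
    (hb : χ' = ∑ i, (b i : ℚ) • binomPoly (i : ℕ)) :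
    χ'.degree = χ.degree ∧
    b (Fin.last (2*n)) = a (Fin.last (2*n)) ∧
    ∀ i : Fin (2*n+1), (i : ℕ) = χ.natDegree → b i = a i := by
  -- degree bounds coming from the canonical representations
  have hdega : χ.natDegree ≤ 2*n := by
    rw [ha]
    apply Polynomial.natDegree_sum_le_of_forall_le
    intro i _
    exact (Polynomial.natDegree_smul_le _ _).trans
      ((binomPoly_natDegree_le _).trans (Nat.lt_succ_iff.mp i.isLt))
  have hdegb : χ'.natDegree ≤ 2*n := by
    rw [hb]
    apply Polynomial.natDegree_sum_le_of_forall_le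
    intro i _
    exact (Polynomial.natDegree_smul_le _ _).trans
      ((binomPoly_natDegree_le _).trans (Nat.lt_succ_iff.mp i.isLt))
  -- the two-sided shift comparison
  obtain ⟨c, N1, h1⟩ := eval_shift K n f g χ χ' hχ hχ'
  obtain ⟨c', N2, h2⟩ := eval_shift K n g f χ' χ hχ' hχ
  obtain ⟨N3, h3⟩ := eval_nonneg K n f χ hχ
  obtain ⟨N4, h4⟩ := eval_nonneg K n g χ' hχ'
  set N : ℕ := max (max N1 N2) (max N3 N4) with hNdef
  have h1' : ∀ s : ℕ, N ≤ s → χ.eval (s : ℚ) ≤ χ'.eval ((s : ℚ) + (c : ℚ)) :=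
    fun s hs => h1 s (by omega)
  have h2' : ∀ s : ℕ, N ≤ s → χ'.eval (s : ℚ) ≤ χ.eval ((s : ℚ) + (c' : ℚ)) :=
    fun s hs => h2 s (by omega)
  have h3' : ∀ s : ℕ, N ≤ s → 0 ≤ χ.eval (s : ℚ) := fun s hs => h3 s (by omega)
  have h4' : ∀ s : ℕ, N ≤ s → 0 ≤ χ'.eval (s : ℚ) := fun s hs => h4 s (by omega)
  by_cases hz : χ = 0
  · -- degenerate case: both polynomials vanish
    have hz' : χ' = 0 := by
      apply poly_eq_zero_of_eventually_zero χ' N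
      intro s hs
      have hup := h2' s hs
      rw [hz] at hup
      simp only [Polynomial.eval_zero] at hup
      exact le_antisymm hup (h4' s hs)
    have hacoe : ∀ i : Fin (2*n+1), a i = 0 := by
      intro i
      have := binom_repr_coeff a χ ha (j := 0) (fun k _ => by rw [hz, Polynomial.coeff_zero])
        i (Nat.zero_le _)
      rw [hz, Polynomial.coeff_zero, mul_zero] at this
      exact_mod_cast this
    have hbcoe : ∀ i : Fin (2*n+1), b i = 0 := by
      intro i
      have := binom_repr_coeff b χ' hb (j := 0) (fun k _ => by rw [hz', Polynomial.coeff_zero])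
        i (Nat.zero_le _)
      rw [hz', Polynomial.coeff_zero, mul_zero] at this
      exact_mod_cast this
    refine ⟨by rw [hz, hz'], by rw [hacoe, hbcoe], fun i _ => by rw [hacoe, hbcoe]⟩
  · -- main case
    have hz' : χ' ≠ 0 := by
      intro hz'
      apply hz
      apply poly_eq_zero_of_eventually_zero χ N
      intro s hs
      have hup := h1' s hs
      rw [hz'] at hup
      simp only [Polynomial.eval_zero] at hup
      exact le_antisymm hup (h3' s hs)
    have hd : χ.natDegree = χ'.natDegree :=
      natDegree_eq_of_two_shifts χ χ' c c' N hz hz' h1' h2'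
    have hcoeffeq : ∀ k : ℕ, χ.natDegree ≤ k → χ.coeff k = χ'.coeff k := by
      intro k hk
      exact coeff_eq_of_two_shifts χ χ' c c' N h1' h2' k hk (hd ▸ hk)
    have hfa : ∀ k : Fin (2*n+1), χ.natDegree ≤ (k : ℕ) →
        (a k : ℚ) = ((k : ℕ).factorial : ℚ) * χ.coeff (k : ℕ) :=
      binom_repr_coeff a χ ha
        (fun k hk => Polynomial.coeff_eq_zero_of_natDegree_lt hk)
    have hfb : ∀ k : Fin (2*n+1), χ.natDegree ≤ (k : ℕ) →
        (b k : ℚ) = ((k : ℕ).factorial : ℚ) * χ'.coeff (k : ℕ) := by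
      intro k hk
      exact binom_repr_coeff b χ' hb
        (fun k hk => Polynomial.coeff_eq_zero_of_natDegree_lt (hd ▸ hk)) k (hd ▸ hk)
    refine ⟨?_, ?_, ?_⟩
    · rw [Polynomial.degree_eq_natDegree hz, Polynomial.degree_eq_natDegree hz', hd]
    · have hlast : ((Fin.last (2*n) : Fin (2*n+1)) : ℕ) = 2*n := rfl
      have e1 := hfa (Fin.last (2*n)) (by rw [hlast]; exact hdega)
      have e2 := hfb (Fin.last (2*n)) (by rw [hlast]; exact hdega)
      rw [hlast] at e1 e2
      rw [hcoeffeq (2*n) hdega] at e1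
      have : (b (Fin.last (2*n)) : ℚ) = (a (Fin.last (2*n)) : ℚ) := by
        rw [e1, e2]
      exact_mod_cast this
    · intro i hi
      have e1 := hfa i (le_of_eq hi.symm)
      have e2 := hfb i (le_of_eq hi.symm)
      rw [hcoeffeq (i : ℕ) (le_of_eq hi.symm)] at e1
      have : (b i : ℚ) = (a i : ℚ) := by rw [e1, e2]
      exact_mod_cast this

end
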